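/- For every finite simple graph without isolated vertices, let spec(Δ_p) denote the set of all λ ∈ ℝ for which Δ_p has an eigenpair (λ,x). Then the set-valued map p ↦ spec(Δ_p) is upper semi-continuous on [1,+∞): for every p ≥ 1 and every ε > 0 there exists δ > 0 such that for every p' ≥ 1 with |p'−p| < δ, every λ' ∈ spec(Δ_{p'}) satisfies |λ'−λ| < ε for some λ ∈ spec(Δ_p). -/

import Mathlib

open scoped BigOperators Pointwise NNReal Classical

noncomputable section

/-! ### The graph `p`-Laplacian: Rayleigh quotients, genus, variational eigenvalues -/

/-- `Σ_{{i,j}∈E} |x_i − x_j|^p` (each unordered edge counted once). -/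
def TVp {n : ℕ} (G : SimpleGraph (Fin n)) [DecidableRel G.Adj] (p : ℝ) (x : Fin n → ℝ) : ℝ :=
  (∑ i : Fin n, ∑ j : Fin n, if G.Adj i j then |x i - x j| ^ p else 0) / 2

/-- `Σ_{i∈V} deg(i)·|x_i|^p`. -/
def Np {n : ℕ} (G : SimpleGraph (Fin n)) [DecidableRel G.Adj] (p : ℝ) (x : Fin n → ℝ) : ℝ :=
  ∑ i : Fin n, (G.degree i : ℝ) * |x i| ^ p

/-- The `p`-Rayleigh quotient `F_p`. -/
def Fp {n : ℕ} (G : SimpleGraph (Fin n)) [DecidableRel G.Adj] (p : ℝ) (x : Fin n → ℝ) : ℝ :=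
  TVp G p x / Np G p x

/-- A set is (centrally) symmetric if `S = -S`. -/
def SymmSet {n : ℕ} (S : Set (Fin n → ℝ)) : Prop := ∀ x ∈ S, -x ∈ S

/-- There is a continuous odd map from `S` to the unit sphere `𝕊^{k-1} ⊂ ℝ^k`. -/
def HasOddMapToSphere {n : ℕ} (S : Set (Fin n → ℝ)) (k : ℕ) : Prop :=
  ∃ φ : (Fin n → ℝ) → EuclideanSpace ℝ (Fin k),
    ContinuousOn φ S ∧ (∀ x ∈ S, ‖φ x‖ = 1) ∧ ∀ x ∈ S, φ (-x) = -φ x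

/-- There is a continuous odd map from the unit sphere `𝕊^{k-1} ⊂ ℝ^k` to `S`. -/
def HasOddMapFromSphere {n : ℕ} (S : Set (Fin n → ℝ)) (k : ℕ) : Prop :=
  ∃ φ : EuclideanSpace ℝ (Fin k) → (Fin n → ℝ),
    ContinuousOn φ (Metric.sphere (0 : EuclideanSpace ℝ (Fin k)) 1) ∧
    (∀ x ∈ Metric.sphere (0 : EuclideanSpace ℝ (Fin k)) 1, φ x ∈ S) ∧
    ∀ x ∈ Metric.sphere (0 : EuclideanSpace ℝ (Fin k)) 1, φ (-x) = -φ x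

/-- The Krasnoselskii genus `γ⁻`. -/
def genNeg {n : ℕ} (S : Set (Fin n → ℝ)) : ℕ :=
  if S.Nonempty ∧ SymmSet S then sInf {k | 1 ≤ k ∧ HasOddMapToSphere S k} else 0

/-- The index `γ⁺`. -/
def genPos {n : ℕ} (S : Set (Fin n → ℝ)) : ℕ :=
  if S.Nonempty ∧ SymmSet S then sSup {k | 1 ≤ k ∧ HasOddMapFromSphere S k} else 0

/-- Admissible sets for the min-max principle: symmetric compact subsets of `ℝ^n∖{0}`. -/
def Admissible {n : ℕ} (S : Set (Fin n → ℝ)) : Prop :=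
  IsCompact S ∧ (0 : Fin n → ℝ) ∉ S ∧ SymmSet S

/-- The variational eigenvalues `λ_k⁻(Δ_p)`. -/
def lamNeg {n : ℕ} (G : SimpleGraph (Fin n)) [DecidableRel G.Adj] (p : ℝ) (k : ℕ) : ℝ :=
  sInf {r | ∃ S : Set (Fin n → ℝ), Admissible S ∧ k ≤ genNeg S ∧ r = sSup (Fp G p '' S)}

/-- The min-max eigenvalues `λ_k⁺(Δ_p)`. -/
def lamPos {n : ℕ} (G : SimpleGraph (Fin n)) [DecidableRel G.Adj] (p : ℝ) (k : ℕ) : ℝ :=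
  sInf {r | ∃ S : Set (Fin n → ℝ), Admissible S ∧ k ≤ genPos S ∧ r = sSup (Fp G p '' S)}

/-! ### Eigenpairs of `Δ_p` -/

/-- The set-valued sign: `Sgn(t) = {1}` if `t>0`, `[-1,1]` if `t=0`, `{-1}` if `t<0`. -/
def Sgn (t : ℝ) : Set ℝ := if 0 < t then {1} else if t < 0 then {-1} else Set.Icc (-1) 1

/-- Eigenpairs of the graph `p`-Laplacian for `p > 1`.  (Note that for `t = 0` the
expression `|t|^(p-2) * t` equals `0`, matching the convention `|t|^{p-2}t = 0`.) -/
def IsEigenpairP {n : ℕ} (G : SimpleGraph (Fin n)) [DecidableRel G.Adj] (p lam : ℝ)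
    (x : Fin n → ℝ) : Prop :=
  x ≠ 0 ∧ ∀ i, (∑ j : Fin n, if G.Adj i j then |x i - x j| ^ (p - 2) * (x i - x j) else 0) =
    lam * (G.degree i : ℝ) * (|x i| ^ (p - 2) * x i)

/-- Eigenpairs of the graph `1`-Laplacian. -/
def IsEigenpair1 {n : ℕ} (G : SimpleGraph (Fin n)) [DecidableRel G.Adj] (lam : ℝ)
    (x : Fin n → ℝ) : Prop :=
  x ≠ 0 ∧ ∃ z : Fin n → Fin n → ℝ,
    (∀ i j, G.Adj i j → z i j ∈ Sgn (x i - x j)) ∧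
    (∀ i j, G.Adj i j → z i j = -z j i) ∧
    ∀ i, (∑ j : Fin n, if G.Adj i j then z i j else 0) ∈
      (fun s => lam * (G.degree i : ℝ) * s) '' Sgn (x i)

/-- Eigenpairs of `Δ_p` for `p ≥ 1` (with the `1`-Laplacian convention at `p = 1`). -/
def IsEigenpair {n : ℕ} (G : SimpleGraph (Fin n)) [DecidableRel G.Adj] (p lam : ℝ)
    (x : Fin n → ℝ) : Prop :=
  (p = 1 ∧ IsEigenpair1 G lam x) ∨ (1 < p ∧ IsEigenpairP G p lam x)

/-! ### Cheeger constants -/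

/-- `|∂A|`: the number of edges with exactly one endpoint in `A`. -/
def eBoundary {n : ℕ} (G : SimpleGraph (Fin n)) [DecidableRel G.Adj] (A : Finset (Fin n)) : ℕ :=
  ∑ i ∈ A, ∑ j ∈ Aᶜ, if G.Adj i j then 1 else 0

/-- `vol(A) = Σ_{i∈A} deg(i)`. -/
def volG {n : ℕ} (G : SimpleGraph (Fin n)) [DecidableRel G.Adj] (A : Finset (Fin n)) : ℕ :=
  ∑ i ∈ A, G.degree i

/-- The multi-way Cheeger constants `h_k`. -/
def cheeger {n : ℕ} (G : SimpleGraph (Fin n)) [DecidableRel G.Adj] (k : ℕ) : ℝ :=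
  sInf {r | ∃ A : Fin k → Finset (Fin n), (∀ i, (A i).Nonempty) ∧
    (∀ i j, i ≠ j → Disjoint (A i) (A j)) ∧
    r = ⨆ i, (eBoundary G (A i) : ℝ) / (volG G (A i) : ℝ)}
/-! ### The map Φ -/

/-- `Φ_c(x)_i = |x_i|^c · sign(x_i)`. -/
def Phi {n : ℕ} (c : ℝ) (x : Fin n → ℝ) : Fin n → ℝ := fun i => |x i| ^ c * Real.sign (x i)

/-! ### The simplicial complex `K_n` and the modified Cheeger constants -/

/-- The vector `1_A - 1_B`. -/
def charVec {n : ℕ} (A B : Finset (Fin n)) : Fin n → ℝ :=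
  fun i => if i ∈ A then 1 else if i ∈ B then -1 else 0

/-- The inclusion order on pairs of sets: `(A,B) ≺ (A',B')` iff `A ⊆ A'` and `B ⊆ B'`. -/
def pairLE {n : ℕ} (a b : Finset (Fin n) × Finset (Fin n)) : Prop := a.1 ⊆ b.1 ∧ a.2 ⊆ b.2

/-- The geometric realization `|K(𝒜)|`: the union over all chains of elements of `𝒜` of the
convex hulls of the corresponding vectors `1_A - 1_B`. -/
def geomComplex {n : ℕ} (𝒜 : Set (Finset (Fin n) × Finset (Fin n))) : Set (Fin n → ℝ) :=
  ⋃ (C : Set (Finset (Fin n) × Finset (Fin n))) (_ : C ⊆ 𝒜) (_ : IsChain pairLE C),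
    convexHull ℝ ((fun ab => charVec ab.1 ab.2) '' C)

/-- The modified combinatorial `k`-way Cheeger constant `ĥ_k⁻`. -/
def hHatNeg {n : ℕ} (G : SimpleGraph (Fin n)) [DecidableRel G.Adj] (k : ℕ) : ℝ :=
  sInf {r | ∃ 𝒜 : Set (Finset (Fin n) × Finset (Fin n)),
    (∀ ab ∈ 𝒜, Disjoint ab.1 ab.2 ∧ (ab.1 ∪ ab.2).Nonempty) ∧
    k ≤ genNeg (geomComplex 𝒜) ∧
    r = sSup ((fun ab : Finset (Fin n) × Finset (Fin n) =>
      ((eBoundary G ab.1 : ℝ) + (eBoundary G ab.2 : ℝ)) / (volG G (ab.1 ∪ ab.2) : ℝ)) '' 𝒜)}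

/-! ### Subpartitions into cliques and the pseudo-independence number -/

/-- `c(V_i) = 1` if `|V_i| ≤ 2` and `c(V_i) = 2` if `|V_i| ≥ 3`. -/
def cOf {n : ℕ} (A : Finset (Fin n)) : ℕ := if A.card ≤ 2 then 1 else 2

/-- A subpartition of `V` into sets each inducing a complete subgraph of `G`. -/
def IsCliqueSubpartition {n : ℕ} (G : SimpleGraph (Fin n)) (P : Finset (Finset (Fin n))) : Prop :=
  (∀ A ∈ P, A.Nonempty ∧ G.IsClique (A : Set (Fin n))) ∧
    ∀ A ∈ P, ∀ B ∈ P, A ≠ B → Disjoint A B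

/-- The members of `P` are pairwise non-adjacent: every edge of `G` meets at most one of them. -/
def PairwiseNonAdjacent {n : ℕ} (G : SimpleGraph (Fin n)) (P : Finset (Finset (Fin n))) : Prop :=
  ∀ i j, G.Adj i j → ∀ A ∈ P, ∀ B ∈ P, (i ∈ A ∨ j ∈ A) → (i ∈ B ∨ j ∈ B) → A = B

/-- The pseudo-independence number `α_*(G)`. -/
def pseudoIndepNum {n : ℕ} (G : SimpleGraph (Fin n)) : ℕ :=
  sSup {m | ∃ P : Finset (Finset (Fin n)), IsCliqueSubpartition G P ∧
    PairwiseNonAdjacent G P ∧ m = ∑ A ∈ P, cOf A}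

/-- `h_*(P)`. -/
def hStar {n : ℕ} (G : SimpleGraph (Fin n)) [DecidableRel G.Adj]
    (P : Finset (Finset (Fin n))) : ℝ :=
  sInf {r | ∃ A : Finset (Fin n), A.Nonempty ∧ (∀ v ∈ A, ∃ W ∈ P, v ∈ W) ∧
    (∀ W ∈ P, (A ∩ W).card ≤ 1) ∧ r = (eBoundary G A : ℝ) / (volG G A : ℝ)}

/-! ### The set-valued 1-Laplacian and the p-Laplacian operator -/

/-- The set `Δ_1 x`. -/
def Delta1Set {n : ℕ} (G : SimpleGraph (Fin n)) [DecidableRel G.Adj] (x : Fin n → ℝ) :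
    Set (Fin n → ℝ) :=
  {v | ∃ z : Fin n → Fin n → ℝ,
    (∀ i j, G.Adj i j → z i j ∈ Sgn (x i - x j)) ∧
    (∀ i j, G.Adj i j → z i j = -z j i) ∧
    v = fun i => ∑ j : Fin n, if G.Adj i j then z i j else 0}

/-- The `p`-Laplacian `Δ_p x` for `p > 1`. -/
def DeltaP {n : ℕ} (G : SimpleGraph (Fin n)) [DecidableRel G.Adj] (p : ℝ) (x : Fin n → ℝ) :
    Fin n → ℝ :=
  fun i => ∑ j : Fin n, if G.Adj i j then |x i - x j| ^ (p - 2) * (x i - x j) else 0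

/-- The normalized eigenspace `Ŝ_λ(Δ_p)`. -/
def hatS {n : ℕ} (G : SimpleGraph (Fin n)) [DecidableRel G.Adj] (p lam : ℝ) :
    Set (Fin n → ℝ) :=
  {x | ‖x‖ = 1 ∧ IsEigenpair G p lam x}


/-! ### Auxiliary machinery for upper semicontinuity -/

section USCAux
open Filter Topology

lemma usc_sgn_mem_iff {z t : ℝ} : z ∈ Sgn t ↔ (z * t = |t| ∧ |z| ≤ 1) := by
  unfold Sgn
  split_ifs with h1 h2
  · simp only [Set.mem_singleton_iff]
    constructor
    · rintro rfl; simp [abs_of_pos h1]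
    · rintro ⟨he, -⟩
      have : z * t = 1 * t := by rw [he, one_mul, abs_of_pos h1]
      exact mul_right_cancel₀ (ne_of_gt h1) this
  · simp only [Set.mem_singleton_iff]
    constructor
    · rintro rfl; constructor
      · rw [abs_of_neg h2]; ring
      · simp
    · rintro ⟨he, -⟩
      have : z * t = (-1) * t := by rw [he, abs_of_neg h2]; ring
      exact mul_right_cancel₀ (ne_of_lt h2) this
  · have ht : t = 0 := le_antisymm (not_lt.1 h1) (not_lt.1 h2)
    subst ht
    simp [Set.mem_Icc, abs_le]

lemma usc_pform_eq {q t : ℝ} (hq : 1 < q) : (|t| ^ (q-2) * t) * t = |t| ^ q := by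
  rcases eq_or_ne t 0 with rfl | ht
  · simp [Real.zero_rpow (by linarith : q ≠ 0)]
  · have h0 : 0 < |t| := abs_pos.2 ht
    have e2 : |t| ^ (2:ℝ) = |t| * |t| := by
      rw [show (2:ℝ) = ((2:ℕ):ℝ) by norm_num, Real.rpow_natCast]; ring
    have e : |t| ^ q = |t| ^ (q-2) * (|t| * |t|) := by
      rw [← e2, ← Real.rpow_add h0]; norm_num
    rw [e, mul_assoc, abs_mul_abs_self]

lemma usc_pform_abs {q t : ℝ} (hq : 1 < q) : |(|t| ^ (q-2) * t)| = |t| ^ (q-1) := by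
  rcases eq_or_ne t 0 with rfl | ht
  · simp [Real.zero_rpow (by linarith : q - 1 ≠ 0)]
  · have h0 : 0 < |t| := abs_pos.2 ht
    rw [abs_mul, abs_of_nonneg (Real.rpow_nonneg (abs_nonneg t) _),
      show q - 1 = (q-2) + 1 by ring, Real.rpow_add h0, Real.rpow_one]

lemma usc_pform_unique {q t z : ℝ} (hq : 1 < q) (h1 : z * t = |t| ^ q)
    (h2 : |z| ≤ |t| ^ (q-1)) : z = |t| ^ (q-2) * t := by
  rcases eq_or_ne t 0 with rfl | ht
  · have h3 : |z| ≤ 0 := by simpa [Real.zero_rpow (by linarith : q - 1 ≠ 0)] using h2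
    have hz : z = 0 := abs_eq_zero.1 (le_antisymm h3 (abs_nonneg z))
    simp [hz]
  · exact mul_right_cancel₀ ht (by rw [h1, usc_pform_eq hq])

lemma usc_lim_eq {q t z : ℕ → ℝ} {p T Z : ℝ} (hp : 0 < p)
    (hq : Tendsto q atTop (𝓝 p)) (ht : Tendsto t atTop (𝓝 T)) (hz : Tendsto z atTop (𝓝 Z))
    (h : ∀ k, z k * t k = |t k| ^ q k) : Z * T = |T| ^ p := by
  have h2 : Tendsto (fun k => |t k| ^ q k) atTop (𝓝 (|T| ^ p)) :=
    (Real.continuousAt_rpow (|T|, p) (Or.inr hp)).tendsto.comp (ht.abs.prodMk_nhds hq)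
  exact tendsto_nhds_unique ((hz.mul ht).congr h) h2

lemma usc_lim_le {q t z : ℕ → ℝ} {p T Z : ℝ} (hp : 1 ≤ p) (hq1 : ∀ k, 1 ≤ q k)
    (hq : Tendsto q atTop (𝓝 p)) (ht : Tendsto t atTop (𝓝 T)) (hz : Tendsto z atTop (𝓝 Z))
    (h : ∀ k, |z k| ≤ |t k| ^ (q k - 1)) : |Z| ≤ |T| ^ (p - 1) := by
  rcases eq_or_ne T 0 with rfl | hT
  · have htt : ∀ᶠ k in atTop, |t k| ≤ 1 := by
      have := ht.abs.eventually (eventually_lt_nhds (by norm_num : |(0:ℝ)| < 1))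
      filter_upwards [this] with k hk using le_of_lt hk
    rcases eq_or_lt_of_le hp with rfl | hp1
    · rw [abs_zero, sub_self, Real.rpow_zero]
      refine le_of_tendsto hz.abs ?_
      filter_upwards [htt] with k hk
      exact (h k).trans (Real.rpow_le_one (abs_nonneg _) hk (by linarith [hq1 k]))
    · rw [abs_zero, Real.zero_rpow (by linarith : p - 1 ≠ 0)]
      have hqev : ∀ᶠ k in atTop, (p-1)/2 ≤ q k - 1 := by
        have := hq.eventually (eventually_gt_nhds (by linarith : (p+1)/2 < p))
        filter_upwards [this] with k hk; linarith
      have hbd : ∀ᶠ k in atTop, |z k| ≤ |t k| ^ ((p-1)/2) := by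
        filter_upwards [htt, hqev] with k hk1 hk2
        rcases eq_or_ne (t k) 0 with h0 | h0
        · have := h k
          rw [h0, abs_zero, Real.zero_rpow (by linarith : q k - 1 ≠ 0)] at this
          rw [h0, abs_zero, Real.zero_rpow (by linarith : (p-1)/2 ≠ 0)]
          exact this
        · exact (h k).trans (Real.rpow_le_rpow_of_exponent_ge (abs_pos.2 h0) hk1 hk2)
      have h3 : Tendsto (fun k => |t k| ^ ((p-1)/2)) atTop (𝓝 0) := by
        have hc : ContinuousAt (fun u : ℝ => u ^ ((p-1)/2)) 0 :=
          Real.continuousAt_rpow_const 0 _ (Or.inr (by linarith))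
        have ht0 : Tendsto (fun x => |t x|) atTop (𝓝 (0:ℝ)) := by simpa using ht.abs
        have := hc.tendsto.comp ht0
        simpa [Function.comp_def, Real.zero_rpow (by linarith : (p-1)/2 ≠ 0)] using this
      exact le_of_tendsto_of_tendsto hz.abs h3 hbd
  · have h2 : Tendsto (fun k => |t k| ^ (q k - 1)) atTop (𝓝 (|T| ^ (p-1))) :=
      (Real.continuousAt_rpow (|T|, p-1) (Or.inl (abs_ne_zero.2 hT))).tendsto.comp
        (ht.abs.prodMk_nhds (hq.sub_const 1))
    exact le_of_tendsto_of_tendsto hz.abs h2 (Filter.Eventually.of_forall h)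


variable {n : ℕ} (G : SimpleGraph (Fin n)) [DecidableRel G.Adj]

/-- A closed reformulation of the eigenpair equations, valid uniformly for `q ≥ 1`. -/
def ClosedRel (q lam : ℝ) (x : Fin n → ℝ) (z : Fin n → Fin n → ℝ) (s : Fin n → ℝ) : Prop :=
  (∀ i j, G.Adj i j → z i j * (x i - x j) = |x i - x j| ^ q) ∧
  (∀ i j, |z i j| ≤ |x i - x j| ^ (q - 1)) ∧
  (∀ i j, G.Adj i j → z i j = - z j i) ∧
  (∀ i, s i * x i = |x i| ^ q) ∧
  (∀ i, |s i| ≤ |x i| ^ (q - 1)) ∧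
  (∀ i, (∑ j : Fin n, if G.Adj i j then z i j else 0) = lam * (G.degree i : ℝ) * s i)

lemma closedRel_of_eig {q lam : ℝ} {x : Fin n → ℝ} (h : IsEigenpair G q lam x) :
    ∃ z s, ClosedRel G q lam x z s := by
  rcases h with ⟨hq, hx, z, hz1, hz2, hz3⟩ | ⟨hq, hx, heq⟩
  · subst hq
    have hz3' : ∀ i, ∃ t, t ∈ Sgn (x i) ∧
        lam * (G.degree i : ℝ) * t = ∑ j : Fin n, if G.Adj i j then z i j else 0 := by
      intro i
      obtain ⟨t, ht, hte⟩ := hz3 i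
      exact ⟨t, ht, hte⟩
    choose s hs1 hs2 using hz3'
    refine ⟨fun i j => if G.Adj i j then z i j else 0, s, ?_, ?_, ?_, ?_, ?_, ?_⟩
    · intro i j hij
      dsimp only
      rw [if_pos hij, Real.rpow_one]
      exact (usc_sgn_mem_iff.1 (hz1 i j hij)).1
    · intro i j
      dsimp only
      rw [sub_self, Real.rpow_zero]
      by_cases hij : G.Adj i j
      · rw [if_pos hij]; exact (usc_sgn_mem_iff.1 (hz1 i j hij)).2
      · rw [if_neg hij]; simp
    · intro i j hij
      dsimp only
      rw [if_pos hij, if_pos hij.symm]; exact hz2 i j hij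
    · intro i
      rw [Real.rpow_one]; exact (usc_sgn_mem_iff.1 (hs1 i)).1
    · intro i
      rw [sub_self, Real.rpow_zero]; exact (usc_sgn_mem_iff.1 (hs1 i)).2
    · intro i
      dsimp only
      have he : (∑ j : Fin n, if G.Adj i j then (if G.Adj i j then z i j else 0) else 0)
          = ∑ j : Fin n, if G.Adj i j then z i j else 0 :=
        Finset.sum_congr rfl fun j _ => by by_cases hij : G.Adj i j <;> simp [hij]
      rw [he]
      exact (hs2 i).symm
  · refine ⟨fun i j => |x i - x j| ^ (q-2) * (x i - x j), fun i => |x i| ^ (q-2) * x i,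
      ?_, ?_, ?_, ?_, ?_, ?_⟩
    · intro i j _; exact usc_pform_eq hq
    · intro i j; exact le_of_eq (usc_pform_abs hq)
    · intro i j hij
      dsimp only
      rw [abs_sub_comm (x j) (x i)]; ring
    · intro i; exact usc_pform_eq hq
    · intro i; exact le_of_eq (usc_pform_abs hq)
    · intro i
      rw [heq i]

lemma eig_of_closedRel {q lam : ℝ} {x : Fin n → ℝ} {z : Fin n → Fin n → ℝ} {s : Fin n → ℝ}
    (hq : 1 ≤ q) (hx : x ≠ 0) (h : ClosedRel G q lam x z s) : IsEigenpair G q lam x := by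
  obtain ⟨h1, h2, h3, h4, h5, h6⟩ := h
  rcases eq_or_lt_of_le hq with rfl | hq1
  · left
    refine ⟨rfl, hx, z, fun i j hij => ?_, h3, fun i => ?_⟩
    · refine usc_sgn_mem_iff.2 ⟨?_, ?_⟩
      · have := h1 i j hij; rwa [Real.rpow_one] at this
      · have := h2 i j; rwa [sub_self, Real.rpow_zero] at this
    · refine ⟨s i, usc_sgn_mem_iff.2 ⟨?_, ?_⟩, ?_⟩
      · have := h4 i; rwa [Real.rpow_one] at this
      · have := h5 i; rwa [sub_self, Real.rpow_zero] at this
      · exact (h6 i).symm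
  · right
    refine ⟨hq1, hx, fun i => ?_⟩
    have hz : ∀ j, G.Adj i j → z i j = |x i - x j| ^ (q-2) * (x i - x j) :=
      fun j hij => usc_pform_unique hq1 (h1 i j hij) (h2 i j)
    have hs : s i = |x i| ^ (q-2) * x i := usc_pform_unique hq1 (h4 i) (h5 i)
    calc (∑ j : Fin n, if G.Adj i j then |x i - x j| ^ (q - 2) * (x i - x j) else 0)
        = ∑ j : Fin n, if G.Adj i j then z i j else 0 := by
          refine Finset.sum_congr rfl fun j _ => ?_
          by_cases hij : G.Adj i j
          · rw [if_pos hij, if_pos hij, hz j hij]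
          · rw [if_neg hij, if_neg hij]
      _ = lam * (G.degree i : ℝ) * s i := h6 i
      _ = lam * (G.degree i : ℝ) * (|x i| ^ (q - 2) * x i) := by rw [hs]

lemma closedRel_smul {q lam : ℝ} {x : Fin n → ℝ} {z : Fin n → Fin n → ℝ} {s : Fin n → ℝ}
    {c : ℝ} (hc : 0 < c) (h : ClosedRel G q lam x z s) :
    ClosedRel G q lam (c • x) (fun i j => c ^ (q-1) * z i j) (fun i => c ^ (q-1) * s i) := by
  obtain ⟨h1, h2, h3, h4, h5, h6⟩ := h
  have hc0 : (0:ℝ) ≤ c := hc.le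
  have hcq : c ^ (q-1) * c = c ^ q := by
    have hh := Real.rpow_add hc (q-1) 1
    rw [Real.rpow_one] at hh
    rw [← hh]; norm_num
  have hcnn : (0:ℝ) ≤ c ^ (q-1) := Real.rpow_nonneg hc0 _
  have key : ∀ t : ℝ, |c * t| ^ q = c ^ q * |t| ^ q := fun t => by
    rw [abs_mul, abs_of_pos hc, Real.mul_rpow hc0 (abs_nonneg t)]
  have key1 : ∀ t : ℝ, |c * t| ^ (q-1) = c ^ (q-1) * |t| ^ (q-1) := fun t => by
    rw [abs_mul, abs_of_pos hc, Real.mul_rpow hc0 (abs_nonneg t)]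
  have hxy : ∀ i j, (c • x) i - (c • x) j = c * (x i - x j) := fun i j => by
    simp [smul_eq_mul]; ring
  have hxi : ∀ i, (c • x) i = c * x i := fun i => by simp [smul_eq_mul]
  refine ⟨?_, ?_, ?_, ?_, ?_, ?_⟩
  · intro i j hij
    dsimp only
    rw [hxy i j]
    calc (c ^ (q-1) * z i j) * (c * (x i - x j))
        = (c ^ (q-1) * c) * (z i j * (x i - x j)) := by ring
      _ = c ^ q * |x i - x j| ^ q := by rw [hcq, h1 i j hij]
      _ = |c * (x i - x j)| ^ q := (key _).symm
  · intro i j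
    dsimp only
    rw [hxy i j, key1, abs_mul, abs_of_nonneg hcnn]
    exact mul_le_mul_of_nonneg_left (h2 i j) hcnn
  · intro i j hij
    dsimp only
    rw [h3 i j hij]; ring
  · intro i
    dsimp only
    rw [hxi i]
    calc (c ^ (q-1) * s i) * (c * x i)
        = (c ^ (q-1) * c) * (s i * x i) := by ring
      _ = c ^ q * |x i| ^ q := by rw [hcq, h4 i]
      _ = |c * x i| ^ q := (key _).symm
  · intro i
    dsimp only
    rw [hxi i, key1, abs_mul, abs_of_nonneg hcnn]
    exact mul_le_mul_of_nonneg_left (h5 i) hcnn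
  · intro i
    dsimp only
    have he : (∑ j : Fin n, if G.Adj i j then c ^ (q-1) * z i j else 0)
        = c ^ (q-1) * ∑ j : Fin n, if G.Adj i j then z i j else 0 := by
      rw [Finset.mul_sum]
      exact Finset.sum_congr rfl fun j _ => by by_cases hij : G.Adj i j <;> simp [hij]
    rw [he, h6 i]; ring


lemma usc_deg_sum_const {i : Fin n} (c : ℝ) :
    (∑ j : Fin n, if G.Adj i j then c else 0) = (G.degree i : ℝ) * c := by
  rw [← Finset.sum_filter]
  rw [Finset.sum_const]
  have hc : (Finset.univ.filter (G.Adj i)).card = G.degree i := by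
    rw [SimpleGraph.degree]
    congr 1
    ext j
    simp [SimpleGraph.mem_neighborFinset]
  rw [hc, nsmul_eq_mul]

lemma usc_exists_abs_one {x : Fin n → ℝ} (hx : ‖x‖ = 1) : ∃ i, |x i| = 1 := by
  by_contra hcon
  push_neg at hcon
  have hlt : ∀ i, |x i| < 1 := by
    intro i
    have h1 : |x i| ≤ 1 := by
      have := norm_le_pi_norm x i
      rwa [hx, Real.norm_eq_abs] at this
    exact lt_of_le_of_ne h1 (hcon i)
  have : ‖x‖ < 1 := (pi_norm_lt_iff one_pos).2 fun i => by rw [Real.norm_eq_abs]; exact hlt i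
  rw [hx] at this
  exact lt_irrefl _ this

lemma usc_lam_bound {p q lam : ℝ} {x : Fin n → ℝ} {z : Fin n → Fin n → ℝ} {s : Fin n → ℝ}
    (hdeg : ∀ i, 0 < G.degree i) (hq1 : 1 ≤ q) (hqp : q - 1 ≤ p)
    (h : ClosedRel G q lam x z s) (hx : ‖x‖ = 1) : |lam| ≤ 2 ^ p := by
  obtain ⟨h1, h2, h3, h4, h5, h6⟩ := h
  obtain ⟨i, hi⟩ := usc_exists_abs_one hx
  have hxle : ∀ j, |x j| ≤ 1 := fun j => by
    have := norm_le_pi_norm x j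
    rwa [hx, Real.norm_eq_abs] at this
  have hsi : |s i| = 1 := by
    have h4i := h4 i
    have habs : |s i| * |x i| = 1 := by
      rw [← abs_mul, h4i, abs_of_nonneg (Real.rpow_nonneg (abs_nonneg _) _), hi, Real.one_rpow]
    rwa [hi, mul_one] at habs
  have hzb : ∀ j, |z i j| ≤ 2 ^ (q - 1) := by
    intro j
    refine (h2 i j).trans ?_
    refine Real.rpow_le_rpow (abs_nonneg _) ?_ (by linarith)
    calc |x i - x j| ≤ |x i| + |x j| := abs_sub _ _
      _ ≤ 2 := by linarith [hxle i, hxle j]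
  have hsum : |∑ j : Fin n, if G.Adj i j then z i j else 0| ≤ (G.degree i : ℝ) * 2 ^ (q-1) := by
    calc |∑ j : Fin n, if G.Adj i j then z i j else 0|
        ≤ ∑ j : Fin n, |if G.Adj i j then z i j else 0| := Finset.abs_sum_le_sum_abs _ _
      _ ≤ ∑ j : Fin n, (if G.Adj i j then (2:ℝ) ^ (q-1) else 0) := by
          refine Finset.sum_le_sum fun j _ => ?_
          by_cases hij : G.Adj i j
          · rw [if_pos hij, if_pos hij]; exact hzb j
          · rw [if_neg hij, if_neg hij]; simp
      _ = (G.degree i : ℝ) * 2 ^ (q-1) := usc_deg_sum_const G _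
  have hdi : (0:ℝ) < (G.degree i : ℝ) := by exact_mod_cast hdeg i
  have hlab : |lam| * (G.degree i : ℝ) ≤ (G.degree i : ℝ) * 2 ^ (q-1) := by
    have h6i := h6 i
    have : |lam * (G.degree i : ℝ) * s i| = |lam| * (G.degree i : ℝ) := by
      rw [abs_mul, abs_mul, hsi, mul_one, abs_of_pos hdi]
    rw [← this, ← h6i]
    exact hsum
  have hl1 : |lam| ≤ 2 ^ (q-1) := by
    rw [mul_comm] at hlab
    exact le_of_mul_le_mul_left hlab hdi
  refine hl1.trans ?_
  exact (Real.rpow_le_rpow_left_iff one_lt_two).2 hqp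

open Filter Topology in
lemma usc_closedRel_limit {q lam : ℕ → ℝ} {x : ℕ → Fin n → ℝ} {z : ℕ → Fin n → Fin n → ℝ}
    {s : ℕ → Fin n → ℝ} {p L : ℝ} {X : Fin n → ℝ} {Z : Fin n → Fin n → ℝ} {S : Fin n → ℝ}
    (hp : 1 ≤ p) (hq1 : ∀ k, 1 ≤ q k)
    (hq : Tendsto q atTop (𝓝 p)) (hlam : Tendsto lam atTop (𝓝 L))
    (hx : ∀ i, Tendsto (fun k => x k i) atTop (𝓝 (X i)))
    (hz : ∀ i j, Tendsto (fun k => z k i j) atTop (𝓝 (Z i j)))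
    (hs : ∀ i, Tendsto (fun k => s k i) atTop (𝓝 (S i)))
    (hrel : ∀ k, ClosedRel G (q k) (lam k) (x k) (z k) (s k)) :
    ClosedRel G p L X Z S := by
  have hp0 : (0:ℝ) < p := by linarith
  refine ⟨?_, ?_, ?_, ?_, ?_, ?_⟩
  · intro i j hij
    exact usc_lim_eq hp0 hq ((hx i).sub (hx j)) (hz i j) fun k => (hrel k).1 i j hij
  · intro i j
    exact usc_lim_le hp hq1 hq ((hx i).sub (hx j)) (hz i j) fun k => (hrel k).2.1 i j
  · intro i j hij
    exact tendsto_nhds_unique (hz i j) (((hz j i).neg).congr fun k => ((hrel k).2.2.1 i j hij).symm)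
  · intro i
    exact usc_lim_eq hp0 hq (hx i) (hs i) fun k => (hrel k).2.2.2.1 i
  · intro i
    exact usc_lim_le hp hq1 hq (hx i) (hs i) fun k => (hrel k).2.2.2.2.1 i
  · intro i
    have hL : Tendsto (fun k => ∑ j : Fin n, if G.Adj i j then z k i j else 0) atTop
        (𝓝 (∑ j : Fin n, if G.Adj i j then Z i j else 0)) := by
      refine tendsto_finset_sum _ fun j _ => ?_
      by_cases hij : G.Adj i j
      · simpa [hij] using hz i j
      · simpa [hij] using tendsto_const_nhds
    have hR : Tendsto (fun k => lam k * (G.degree i : ℝ) * s k i) atTop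
        (𝓝 (L * (G.degree i : ℝ) * S i)) := (hlam.mul tendsto_const_nhds).mul (hs i)
    exact tendsto_nhds_unique hL (hR.congr fun k => ((hrel k).2.2.2.2.2 i).symm)

end USCAux

/-- **Upper semi-continuity of `p ↦ spec(Δ_p)` on `[1,∞)`.** -/
theorem stmt10 {n : ℕ} (G : SimpleGraph (Fin n)) [DecidableRel G.Adj]
    (hdeg : ∀ i, 0 < G.degree i) (p : ℝ) (hp : 1 ≤ p) (ε : ℝ) (hε : 0 < ε) :
    ∃ δ : ℝ, 0 < δ ∧ ∀ p' : ℝ, 1 ≤ p' → |p' - p| < δ →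
      ∀ lam' : ℝ, (∃ x : Fin n → ℝ, IsEigenpair G p' lam' x) →
        ∃ lam : ℝ, (∃ x : Fin n → ℝ, IsEigenpair G p lam x) ∧ |lam' - lam| < ε := by
  classical
  by_contra hcon
  push_neg at hcon
  have hseq : ∀ k : ℕ, ∃ p', 1 ≤ p' ∧ |p' - p| < 1/(k+1) ∧ ∃ lam',
      (∃ x : Fin n → ℝ, IsEigenpair G p' lam' x) ∧
      ∀ lam : ℝ, (∃ x : Fin n → ℝ, IsEigenpair G p lam x) → ε ≤ |lam' - lam| :=
    fun k => hcon (1/(k+1)) (by positivity)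
  choose q hq1 hq2 lam hex hfar using hseq
  have hnorm : ∀ k, ∃ (x : Fin n → ℝ) (z : Fin n → Fin n → ℝ) (s : Fin n → ℝ),
      ClosedRel G (q k) (lam k) x z s ∧ ‖x‖ = 1 := by
    intro k
    obtain ⟨x0, hx0⟩ := hex k
    obtain ⟨z0, s0, hrel0⟩ := closedRel_of_eig G hx0
    have hx0ne : x0 ≠ 0 := by rcases hx0 with ⟨_, h⟩ | ⟨_, h⟩ <;> exact h.1
    have hc : 0 < ‖x0‖ := norm_pos_iff.2 hx0ne
    refine ⟨(‖x0‖⁻¹) • x0, _, _, closedRel_smul G (inv_pos.2 hc) hrel0, ?_⟩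
    rw [norm_smul, norm_inv, norm_norm, inv_mul_cancel₀ (ne_of_gt hc)]
  choose x z s hrel hx1 using hnorm
  have hq2' : ∀ k, q k - 1 ≤ p := by
    intro k
    have h1 : (1:ℝ)/(k+1) ≤ 1 := by
      rw [div_le_one (by positivity)]
      linarith [Nat.cast_nonneg (α := ℝ) k]
    have h2 := (abs_lt.1 (hq2 k)).2
    linarith
  have hlamb : ∀ k, |lam k| ≤ 2 ^ p :=
    fun k => usc_lam_bound G hdeg (hq1 k) (hq2' k) (hrel k) (hx1 k)
  have h2p1 : (1:ℝ) ≤ 2 ^ p := by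
    calc (1:ℝ) = 2 ^ (0:ℝ) := (Real.rpow_zero 2).symm
      _ ≤ 2 ^ p := (Real.rpow_le_rpow_left_iff one_lt_two).2 (by linarith)
  have hRnn : (0:ℝ) ≤ 2 ^ p := by linarith
  set u : ℕ → ℝ × (Fin n → ℝ) × (Fin n → Fin n → ℝ) × (Fin n → ℝ) :=
    fun k => (lam k, x k, z k, s k) with hu
  have hmem : ∀ k, u k ∈ Metric.closedBall
      (0 : ℝ × (Fin n → ℝ) × (Fin n → Fin n → ℝ) × (Fin n → ℝ)) (2 ^ p) := by
    intro k
    rw [mem_closedBall_zero_iff, Prod.norm_def, Prod.norm_def, Prod.norm_def]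
    have hxl : ∀ a, |x k a| ≤ 1 := fun a => by
      have := norm_le_pi_norm (x k) a
      rwa [hx1 k, Real.norm_eq_abs] at this
    refine max_le ?_ (max_le ?_ (max_le ?_ ?_))
    · rw [Real.norm_eq_abs]; exact hlamb k
    · rw [hx1 k]; exact h2p1
    · refine (pi_norm_le_iff_of_nonneg hRnn).2 fun i => ?_
      refine (pi_norm_le_iff_of_nonneg hRnn).2 fun j => ?_
      rw [Real.norm_eq_abs]
      refine ((hrel k).2.1 i j).trans ?_
      have habs2 : |x k i - x k j| ≤ 2 := by
        calc |x k i - x k j| ≤ |x k i| + |x k j| := abs_sub _ _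
          _ ≤ 2 := by linarith [hxl i, hxl j]
      calc |x k i - x k j| ^ (q k - 1)
          ≤ 2 ^ (q k - 1) := Real.rpow_le_rpow (abs_nonneg _) habs2 (by linarith [hq1 k])
        _ ≤ 2 ^ p := (Real.rpow_le_rpow_left_iff one_lt_two).2 (hq2' k)
    · refine (pi_norm_le_iff_of_nonneg hRnn).2 fun i => ?_
      rw [Real.norm_eq_abs]
      refine ((hrel k).2.2.2.2.1 i).trans (le_trans ?_ h2p1)
      exact Real.rpow_le_one (abs_nonneg _) (hxl i) (by linarith [hq1 k])
  obtain ⟨⟨L, X, Z, S⟩, -, φ, hφ, hconv⟩ := (isCompact_closedBall _ _).tendsto_subseq hmem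
  have hL : Filter.Tendsto (fun k => lam (φ k)) Filter.atTop (nhds L) :=
    (continuous_fst.tendsto _).comp hconv
  have hXconv : Filter.Tendsto (fun k => x (φ k)) Filter.atTop (nhds X) :=
    (continuous_fst.tendsto _).comp ((continuous_snd.tendsto _).comp hconv)
  have hZconv : Filter.Tendsto (fun k => z (φ k)) Filter.atTop (nhds Z) :=
    (continuous_fst.tendsto _).comp
      ((continuous_snd.tendsto _).comp ((continuous_snd.tendsto _).comp hconv))
  have hSconv : Filter.Tendsto (fun k => s (φ k)) Filter.atTop (nhds S) :=
    (continuous_snd.tendsto _).comp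
      ((continuous_snd.tendsto _).comp ((continuous_snd.tendsto _).comp hconv))
  have hXp : ∀ i, Filter.Tendsto (fun k => x (φ k) i) Filter.atTop (nhds (X i)) :=
    fun i => tendsto_pi_nhds.1 hXconv i
  have hZp : ∀ i j, Filter.Tendsto (fun k => z (φ k) i j) Filter.atTop (nhds (Z i j)) :=
    fun i j => tendsto_pi_nhds.1 (tendsto_pi_nhds.1 hZconv i) j
  have hSp : ∀ i, Filter.Tendsto (fun k => s (φ k) i) Filter.atTop (nhds (S i)) :=
    fun i => tendsto_pi_nhds.1 hSconv i
  have hqten : Filter.Tendsto q Filter.atTop (nhds p) := by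
    rw [tendsto_iff_dist_tendsto_zero]
    refine squeeze_zero (fun k => dist_nonneg) (fun k => ?_)
      tendsto_one_div_add_atTop_nhds_zero_nat
    rw [Real.dist_eq]
    exact le_of_lt (hq2 k)
  have hqφ : Filter.Tendsto (fun k => q (φ k)) Filter.atTop (nhds p) :=
    hqten.comp hφ.tendsto_atTop
  have hRel : ClosedRel G p L X Z S :=
    usc_closedRel_limit G hp (fun k => hq1 (φ k)) hqφ hL hXp hZp hSp (fun k => hrel (φ k))
  have hXnorm : ‖X‖ = 1 := by
    have h1 : Filter.Tendsto (fun k => ‖x (φ k)‖) Filter.atTop (nhds ‖X‖) :=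
      (continuous_norm.tendsto X).comp hXconv
    have h2 : Filter.Tendsto (fun k => ‖x (φ k)‖) Filter.atTop (nhds 1) :=
      tendsto_const_nhds.congr fun k => (hx1 (φ k)).symm
    exact tendsto_nhds_unique h1 h2
  have hXne : X ≠ 0 := by
    intro h
    rw [h, norm_zero] at hXnorm
    norm_num at hXnorm
  have heig : IsEigenpair G p L X := eig_of_closedRel G hp hXne hRel
  have hfar' : ∀ k, ε ≤ |lam (φ k) - L| := fun k => hfar (φ k) L ⟨X, heig⟩
  have h0 : Filter.Tendsto (fun k => |lam (φ k) - L|) Filter.atTop (nhds 0) := by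
    have := (hL.sub_const L).abs
    simpa using this
  obtain ⟨k, hk⟩ := (h0.eventually (eventually_lt_nhds hε)).exists
  linarith [hfar' k]
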